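/- Let X ⊆ E and Y ⊆ F be nonempty subsets of Banach spaces, h_i : X → X maps with Lip(h) := max_i Lip(h_i) < 1, and v_i : X × Y → F maps that are uniformly Lipschitz in the first variable with constant λ > 0 (‖v_i(x₁,y) − v_i(x₂,y)‖_F ≤ λ‖x₁−x₂‖_E for all y) and uniformly contractive in the second variable with constant c ∈ [0,1) (‖v_i(x,y₁) − v_i(x,y₂)‖_F ≤ c‖y₁−y₂‖_F for all x). Set ϑ := (1−Lip(h))/(2λ). Then each map w_i(x,y) := (h_i(x), v_i(x,y)) on X × Y is a contraction with respect to the norm ‖(x,y)‖_ϑ = ‖x‖_E + ϑ‖y‖_F. -/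

import Mathlib

/-- With `Lip(h) ≤ Lh < 1`, `v i` uniformly `λ`-Lipschitz in the first
variable and uniformly `c`-contractive (`c < 1`) in the second variable, and
`ϑ := (1 − Lh)/(2λ)`, each map `w i (x,y) := (h i x, v i x y)` is a contraction on
`X × Y` with respect to the norm `‖(x,y)‖_ϑ = ‖x‖ + ϑ‖y‖`. -/
theorem stmt_9 {E F : Type*} [NormedAddCommGroup E] [NormedAddCommGroup F]
    (X : Set E) (Y : Set F) (hX : X.Nonempty) (hY : Y.Nonempty)
    (n : ℕ) (h : Fin n → E → E) (hmaps : ∀ i, Set.MapsTo (h i) X X)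
    (Lh : ℝ) (hLh0 : 0 ≤ Lh) (hLh1 : Lh < 1)
    (hhlip : ∀ i, ∀ x₁ ∈ X, ∀ x₂ ∈ X, ‖h i x₁ - h i x₂‖ ≤ Lh * ‖x₁ - x₂‖)
    (v : Fin n → E → F → F) (lam : ℝ) (hlam : 0 < lam)
    (hvx : ∀ i, ∀ y ∈ Y, ∀ x₁ ∈ X, ∀ x₂ ∈ X, ‖v i x₁ y - v i x₂ y‖ ≤ lam * ‖x₁ - x₂‖)
    (c : ℝ) (hc0 : 0 ≤ c) (hc1 : c < 1)
    (hvy : ∀ i, ∀ x ∈ X, ∀ y₁ ∈ Y, ∀ y₂ ∈ Y, ‖v i x y₁ - v i x y₂‖ ≤ c * ‖y₁ - y₂‖) :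
    ∃ K : ℝ, 0 ≤ K ∧ K < 1 ∧ ∀ i, ∀ x₁ ∈ X, ∀ x₂ ∈ X, ∀ y₁ ∈ Y, ∀ y₂ ∈ Y,
      ‖h i x₁ - h i x₂‖ + (1 - Lh) / (2 * lam) * ‖v i x₁ y₁ - v i x₂ y₂‖ ≤
        K * (‖x₁ - x₂‖ + (1 - Lh) / (2 * lam) * ‖y₁ - y₂‖) := by
  set ϑ : ℝ := (1 - Lh) / (2 * lam) with hϑ
  have hϑ0 : 0 < ϑ := div_pos (by linarith) (by linarith)
  refine ⟨max ((1 + Lh) / 2) c, le_max_of_le_right hc0,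
    max_lt (by linarith) hc1, fun i x₁ hx₁ x₂ hx₂ y₁ hy₁ y₂ hy₂ => ?_⟩
  have h1 : ‖h i x₁ - h i x₂‖ ≤ Lh * ‖x₁ - x₂‖ := hhlip i x₁ hx₁ x₂ hx₂
  have h2 : ‖v i x₁ y₁ - v i x₂ y₂‖ ≤ lam * ‖x₁ - x₂‖ + c * ‖y₁ - y₂‖ := by
    calc ‖v i x₁ y₁ - v i x₂ y₂‖
        ≤ ‖v i x₁ y₁ - v i x₁ y₂‖ + ‖v i x₁ y₂ - v i x₂ y₂‖ := norm_sub_le_norm_sub_add_norm_sub _ _ _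
      _ ≤ c * ‖y₁ - y₂‖ + lam * ‖x₁ - x₂‖ :=
          add_le_add (hvy i x₁ hx₁ y₁ hy₁ y₂ hy₂) (hvx i y₂ hy₂ x₁ hx₁ x₂ hx₂)
      _ = _ := by ring
  have key : ‖h i x₁ - h i x₂‖ + ϑ * ‖v i x₁ y₁ - v i x₂ y₂‖
      ≤ (1 + Lh) / 2 * ‖x₁ - x₂‖ + c * (ϑ * ‖y₁ - y₂‖) := by
    have := mul_le_mul_of_nonneg_left h2 hϑ0.le
    have hlam' : ϑ * lam = (1 - Lh) / 2 := by
      rw [hϑ]; field_simp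
    nlinarith [norm_nonneg (x₁ - x₂), norm_nonneg (y₁ - y₂)]
  calc ‖h i x₁ - h i x₂‖ + ϑ * ‖v i x₁ y₁ - v i x₂ y₂‖
      ≤ (1 + Lh) / 2 * ‖x₁ - x₂‖ + c * (ϑ * ‖y₁ - y₂‖) := key
    _ ≤ max ((1 + Lh) / 2) c * ‖x₁ - x₂‖ + max ((1 + Lh) / 2) c * (ϑ * ‖y₁ - y₂‖) :=
        add_le_add (mul_le_mul_of_nonneg_right (le_max_left _ _) (norm_nonneg _))
          (mul_le_mul_of_nonneg_right (le_max_right _ _) (by positivity))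
    _ = _ := by ring
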